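/- For every real r < 2, there exist positive integers k > 1 and ℓ such that 2 - 2/(ℓ+1) ≥ r and the quantity (ℓ(2k+1)+1)/(ℓ+1) equals 1 + (2 - 2/(ℓ+1))·k; in particular, for cost Opt = ℓ+1, algorithm cost Alg = ℓ(2k+1)+1, and normalized error ε = k, we have Alg/Opt = 1 + (2 - 2/(ℓ+1))ε ≥ 1 + rε. -/
import Mathlib

theorem stmt_11 (r : ℝ) (hr : r < 2) :
    ∃ k ℓ : ℕ, 1 < k ∧ 0 < ℓ ∧
      2 - 2 / ((ℓ : ℝ) + 1) ≥ r ∧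
      ((ℓ : ℝ) * (2 * (k : ℝ) + 1) + 1) / ((ℓ : ℝ) + 1)
        = 1 + (2 - 2 / ((ℓ : ℝ) + 1)) * (k : ℝ) ∧
      ((ℓ : ℝ) * (2 * (k : ℝ) + 1) + 1) / ((ℓ : ℝ) + 1) ≥ 1 + r * (k : ℝ) := by
  set ℓ : ℕ := ⌈2 / (2 - r)⌉₊ + 1 with hℓ
  have hpos : (0:ℝ) < 2 - r := by linarith
  have hℓ1 : (0:ℝ) < (ℓ:ℝ) + 1 := by positivity
  have hge : 2 / (2 - r) ≤ (ℓ:ℝ) + 1 := by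
    have := Nat.le_ceil (2 / (2 - r))
    push_cast [hℓ]
    linarith
  have hrle : 2 - 2 / ((ℓ:ℝ) + 1) ≥ r := by
    have h2 : 2 / ((ℓ:ℝ) + 1) ≤ 2 - r := by
      rw [div_le_iff₀ hℓ1]
      calc (2:ℝ) = 2 / (2 - r) * (2 - r) := by field_simp
        _ ≤ (2 - r) * ((ℓ:ℝ) + 1) := by nlinarith
    linarith
  refine ⟨2, ℓ, one_lt_two, Nat.succ_pos _, hrle, ?_, ?_⟩
  · field_simp
    ring
  · have heq : ((ℓ : ℝ) * (2 * (2:ℕ) + 1) + 1) / ((ℓ : ℝ) + 1)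
        = 1 + (2 - 2 / ((ℓ : ℝ) + 1)) * ((2:ℕ):ℝ) := by
      field_simp; ring
    rw [heq]
    have h2 : ((2:ℕ):ℝ) = 2 := by norm_num
    rw [h2]
    nlinarith [hrle]
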